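/- For an integer d ≥ 1, let G be the directed graph on vertex set {0,1,2}^d where for distinct u, v there is an edge from u to v iff every coordinate of u - v (mod 3) lies in {0,2}. Then the minrank of G over F_3 equals 2^d. -/

import Mathlib

/-- A matrix `M` over a field `F` represents a directed graph with adjacency relation `Adj`
if all diagonal entries are nonzero and `M u v = 0` whenever `u ≠ v` and `(u, v)` is not a
directed edge. -/
def RepresentsDi {V F : Type*} [Field F] (Adj : V → V → Prop) (M : Matrix V V F) : Prop :=
  (∀ v, M v v ≠ 0) ∧ ∀ u v : V, u ≠ v → ¬Adj u v → M u v = 0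

/-- The minrank of a directed graph (given by its adjacency relation) over a field `F`. -/
noncomputable def minrankDi (F : Type*) [Field F] {V : Type*} [Fintype V] [DecidableEq V]
    (Adj : V → V → Prop) : ℕ :=
  sInf {r : ℕ | ∃ M : Matrix V V F, RepresentsDi Adj M ∧ M.rank = r}

namespace BlokhuisAux

def emb {d : ℕ} (w : Fin d → Fin 2) : Fin d → Fin 3 := fun i => (w i).castLE (by norm_num)

abbrev Adj (d : ℕ) : (Fin d → Fin 3) → (Fin d → Fin 3) → Prop := fun u v =>
  u ≠ v ∧ ∀ i, (((u i : ℕ) : ZMod 3) - ((v i : ℕ) : ZMod 3)) ≠ 1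

def B3 : Matrix (Fin 3) (Fin 2) (ZMod 3) :=
  Matrix.of fun a s => if s = 0 then ((a : ℕ) : ZMod 3) else 1

def C3 : Matrix (Fin 2) (Fin 3) (ZMod 3) :=
  Matrix.of fun s b => if s = 0 then 1 else -((b : ℕ) : ZMod 3) - 1

lemma B3C3 (a b : Fin 3) :
    ∑ s : Fin 2, B3 a s * C3 s b = ((a : ℕ) : ZMod 3) - ((b : ℕ) : ZMod 3) - 1 := by
  fin_cases a <;> fin_cases b <;> decide

def Mex (d : ℕ) : Matrix (Fin d → Fin 3) (Fin d → Fin 3) (ZMod 3) :=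
  Matrix.of fun u v => ∏ i, (((u i : ℕ) : ZMod 3) - ((v i : ℕ) : ZMod 3) - 1)

lemma Mex_factor (d : ℕ) :
    Mex d = (Matrix.of fun u (s : Fin d → Fin 2) => ∏ i, B3 (u i) (s i)) *
      (Matrix.of fun (s : Fin d → Fin 2) v => ∏ i, C3 (s i) (v i)) := by
  ext u v
  rw [Matrix.mul_apply]
  simp only [Matrix.of_apply, Mex]
  rw [show (∏ i, (((u i : ℕ) : ZMod 3) - ((v i : ℕ) : ZMod 3) - 1)) =
      ∏ i, ∑ s : Fin 2, B3 (u i) s * C3 s (v i) by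
    exact Finset.prod_congr rfl fun i _ => (B3C3 (u i) (v i)).symm]
  rw [Finset.prod_univ_sum]
  exact Finset.sum_congr rfl fun g _ => Finset.prod_mul_distrib

lemma Mex_rank_le (d : ℕ) : (Mex d).rank ≤ 2 ^ d := by
  rw [Mex_factor]
  refine le_trans (Matrix.rank_mul_le_left _ _) ?_
  refine le_trans (Matrix.rank_le_card_width _) ?_
  simp [Fintype.card_fun]

lemma Mex_represents (d : ℕ) : RepresentsDi (Adj d) (Mex d) := by
  constructor
  · intro v
    have : Mex d v v = (-1) ^ d := by
      simp [Mex, sub_self, zero_sub]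
    rw [this]
    exact pow_ne_zero _ (by decide)
  · intro u v huv hadj
    simp only [Adj, not_and, not_forall, not_not] at hadj
    obtain ⟨i, hi⟩ := hadj huv
    exact Finset.prod_eq_zero (Finset.mem_univ i) (by rw [hi]; ring)

lemma aux2 : ∀ a b : Fin 2,
    (((a : ℕ) : ZMod 3) - ((b : ℕ) : ZMod 3) ≠ 1) → a ≤ b := by decide

lemma lower {d : ℕ} (M : Matrix (Fin d → Fin 3) (Fin d → Fin 3) (ZMod 3))
    (hM : RepresentsDi (Adj d) M) : 2 ^ d ≤ M.rank := by
  classical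
  set eqv : (Fin d → Fin 2) ≃ Fin (2 ^ d) := finFunctionFinEquiv
  set N : Matrix (Fin (2 ^ d)) (Fin (2 ^ d)) (ZMod 3) :=
    Matrix.of fun i j => M (emb (eqv.symm i)) (emb (eqv.symm j)) with hN
  -- monotonicity of eqv
  have hmono : ∀ w v : Fin d → Fin 2, (∀ k, w k ≤ v k) → eqv w ≤ eqv v := by
    intro w v h
    rw [Fin.le_def]
    show ((eqv w : Fin (2^d)) : ℕ) ≤ ((eqv v : Fin (2^d)) : ℕ)
    rw [show ((eqv w : Fin (2^d)) : ℕ) = ∑ i, (w i : ℕ) * 2 ^ (i : ℕ) from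
      finFunctionFinEquiv_apply w,
      show ((eqv v : Fin (2^d)) : ℕ) = ∑ i, (v i : ℕ) * 2 ^ (i : ℕ) from
      finFunctionFinEquiv_apply v]
    exact Finset.sum_le_sum fun i _ => Nat.mul_le_mul_right _ (h i)
  -- upper triangular
  have htri : N.BlockTriangular id := by
    intro i j hij
    apply hM.2
    · intro hEq
      have h2 : eqv.symm i = eqv.symm j := by
        funext k
        have := congrFun hEq k
        simpa [emb, Fin.ext_iff] using this
      have h3 : i = j := by
        have := congrArg eqv h2; simpa using this
      exact absurd h3 (ne_of_gt hij)
    · rintro ⟨-, hall⟩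
      have hle : ∀ k, eqv.symm i k ≤ eqv.symm j k := fun k => aux2 _ _ (hall k)
      have := hmono _ _ hle
      simp only [Equiv.apply_symm_apply] at this
      exact absurd this (not_le.2 hij)
  have hdet : N.det ≠ 0 := by
    rw [Matrix.det_of_upperTriangular htri]
    exact Finset.prod_ne_zero_iff.2 fun i _ => hM.1 _
  have hrankN : N.rank = 2 ^ d := by
    rw [Matrix.rank_of_isUnit N ((Matrix.isUnit_iff_isUnit_det N).2 (isUnit_iff_ne_zero.2 hdet))]
    simp
  -- N = P * M * Pᵀ
  set P : Matrix (Fin (2 ^ d)) (Fin d → Fin 3) (ZMod 3) :=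
    Matrix.of fun i u => if u = emb (eqv.symm i) then 1 else 0 with hP
  have hfac : N = P * M * P.transpose := by
    ext i j
    rw [Matrix.mul_apply]
    have hPM : ∀ u, (P * M) i u = M (emb (eqv.symm i)) u := by
      intro u
      rw [Matrix.mul_apply]
      simp [hP, ite_mul, Finset.sum_ite_eq, Finset.sum_ite_eq']
    simp only [hPM, Matrix.transpose_apply, hP, Matrix.of_apply, mul_ite, mul_one, mul_zero]
    simp [Finset.sum_ite_eq, Finset.sum_ite_eq', hN]
    exact (hPM _).symm
  calc 2 ^ d = N.rank := hrankN.symm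
    _ ≤ (P * M).rank := hfac ▸ Matrix.rank_mul_le_left _ _
    _ ≤ M.rank := Matrix.rank_mul_le_right _ _

end BlokhuisAux

/-- For `d ≥ 1`, the directed graph on `{0,1,2}^d` with an edge from `u` to `v` (for `u ≠ v`)
iff every coordinate of `u - v` is `0` or `2` modulo `3` has minrank exactly `2 ^ d`
over `F_3`. -/
theorem minrankDi_blokhuis (d : ℕ) (hd : 1 ≤ d) :
    minrankDi (ZMod 3) (fun u v : Fin d → Fin 3 =>
        u ≠ v ∧ ∀ i, (((u i : ℕ) : ZMod 3) - ((v i : ℕ) : ZMod 3)) ≠ 1) = 2 ^ d := by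
  classical
  have hmem : (BlokhuisAux.Mex d).rank ∈
      {r : ℕ | ∃ M : Matrix (Fin d → Fin 3) (Fin d → Fin 3) (ZMod 3),
        RepresentsDi (BlokhuisAux.Adj d) M ∧ M.rank = r} :=
    ⟨BlokhuisAux.Mex d, BlokhuisAux.Mex_represents d, rfl⟩
  refine le_antisymm ?_ ?_
  · exact le_trans (Nat.sInf_le hmem) (BlokhuisAux.Mex_rank_le d)
  · obtain ⟨M, hrep, hrank⟩ := Nat.sInf_mem (⟨_, hmem⟩ :
      Set.Nonempty {r : ℕ | ∃ M : Matrix (Fin d → Fin 3) (Fin d → Fin 3) (ZMod 3),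
        RepresentsDi (BlokhuisAux.Adj d) M ∧ M.rank = r})
    exact le_of_le_of_eq (BlokhuisAux.lower M hrep) hrank
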